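/- Let 𝒟 be any domain space, H a hypothesis space, R a ranking function space, and define 𝒟' = {D^α : D_XY ∈ 𝒟, α ∈ [0,1)}, where D^α := (1−α)·D_I + α·D_O. Then: (1) 𝒟' is a prior-unknown domain space and 𝒟 ⊆ 𝒟'; (2) if 𝒟 is prior-unknown, then OOD detection is learnable under risk in 𝒟 for H if and only if it is strongly learnable under risk in 𝒟 for H; (3) OOD detection is strongly learnable under risk in 𝒟 for H if and only if it is learnable under risk in 𝒟' for H; (4) OOD detection is learnable under AUC in 𝒟 for R if and only if it is learnable under AUC in 𝒟' for R. -/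

import Mathlib

open MeasureTheory Filter Set
open scoped ENNReal NNReal

noncomputable section

namespace OODF

/-- A *domain*: a mixture `(1-π)·D_I + π·D_O` of an ID joint distribution `D_I` on
`𝒳 × {1,…,K}` and an OOD joint distribution `D_O` on `𝒳 × {K+1}`, with class prior
`π ∈ [0,1)`.  Labels are encoded as naturals: ID labels are `{1,…,K}`, OOD label is `K+1`. -/
structure Domain (𝒳 : Type*) [MeasurableSpace 𝒳] (K : ℕ) where
  DI : Measure (𝒳 × ℕ)
  DO : Measure (𝒳 × ℕ)
  prior : ℝ
  probI : IsProbabilityMeasure DI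
  probO : IsProbabilityMeasure DO
  suppI : DI {p | p.2 ∉ Set.Icc 1 K} = 0
  suppO : DO {p | p.2 ≠ K + 1} = 0
  prior_mem : prior ∈ Set.Ico (0 : ℝ) 1

variable {𝒳 : Type*} [MeasurableSpace 𝒳] {K : ℕ}

namespace Domain

/-- the mixed joint distribution `D_XY = (1-π)·D_I + π·D_O` -/
def joint (D : Domain 𝒳 K) : Measure (𝒳 × ℕ) :=
  ENNReal.ofReal (1 - D.prior) • D.DI + ENNReal.ofReal D.prior • D.DO

/-- the marginal `D_{X_I}` of the ID joint distribution on the feature space -/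
def margI (D : Domain 𝒳 K) : Measure 𝒳 := D.DI.map Prod.fst

/-- the marginal `D_{X_O}` of the OOD joint distribution on the feature space -/
def margO (D : Domain 𝒳 K) : Measure 𝒳 := D.DO.map Prod.fst

/-- the domain `D^α = (1-α)·D_I + α·D_O`, i.e. `D` with its class prior replaced by `α` -/
def withPrior (D : Domain 𝒳 K) (α : Set.Ico (0 : ℝ) 1) : Domain 𝒳 K :=
  { D with prior := α.1, prior_mem := α.2 }

end Domain

/-- a prior-unknown domain space: closed under changing the class prior -/
def PriorUnknown (𝒟 : Set (Domain 𝒳 K)) : Prop :=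
  ∀ D ∈ 𝒟, ∀ α : Set.Ico (0 : ℝ) 1, D.withPrior α ∈ 𝒟

/-- the risk `R_D(h)` w.r.t. the mixed joint distribution -/
def risk (ℓ : ℕ → ℕ → ℝ) (D : Domain 𝒳 K) (h : 𝒳 → ℕ) : ℝ :=
  ∫ p, ℓ (h p.1) p.2 ∂D.joint

/-- the ID risk `R_D^in(h)` -/
def riskIn (ℓ : ℕ → ℕ → ℝ) (D : Domain 𝒳 K) (h : 𝒳 → ℕ) : ℝ :=
  ∫ p, ℓ (h p.1) p.2 ∂D.DI

/-- the OOD risk `R_D^out(h)` -/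
def riskOut (ℓ : ℕ → ℕ → ℝ) (D : Domain 𝒳 K) (h : 𝒳 → ℕ) : ℝ :=
  ∫ p, ℓ (h p.1) (K + 1) ∂D.DO

/-- the `α`-risk `R_D^α(h) = (1-α)·R_D^in(h) + α·R_D^out(h)` -/
def riskA (ℓ : ℕ → ℕ → ℝ) (D : Domain 𝒳 K) (h : 𝒳 → ℕ) (α : ℝ) : ℝ :=
  (1 - α) * riskIn ℓ D h + α * riskOut ℓ D h

/-- the distribution of an i.i.d. sample of size `n` from the ID joint distribution -/
def sampleMeasure (D : Domain 𝒳 K) (n : ℕ) : Measure (Fin n → 𝒳 × ℕ) :=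
  letI := D.probI
  Measure.pi fun _ => D.DI

/-- An algorithm maps, for every sample size `n ≥ 1`, a labeled sample to a function on `𝒳`. -/
abbrev Algorithm (𝒳 β : Type*) := (n : ℕ) → (Fin n → 𝒳 × ℕ) → (𝒳 → β)

/-- `A` is consistent w.r.t. `𝒟` under risk with rate `ε`: it outputs hypotheses in `H`,
the resulting risks are measurable in the sample, and the expected excess risk for samples
of size `n ≥ 1` is at most `ε n`. -/
def ConsistentRisk (ℓ : ℕ → ℕ → ℝ) (𝒟 : Set (Domain 𝒳 K)) (H : Set (𝒳 → ℕ))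
    (A : Algorithm 𝒳 ℕ) (ε : ℕ → ℝ) : Prop :=
  (∀ n : ℕ, 1 ≤ n → ∀ S, A n S ∈ H) ∧
  (∀ D ∈ 𝒟, ∀ n : ℕ, 1 ≤ n → Measurable fun S : Fin n → 𝒳 × ℕ => risk ℓ D (A n S)) ∧
  ∀ D ∈ 𝒟, ∀ n : ℕ, 1 ≤ n →
    ∫ S, (risk ℓ D (A n S) - ⨅ h : H, risk ℓ D h.1) ∂(sampleMeasure D n) ≤ ε n

/-- OOD detection is learnable under risk in `𝒟` for `H` with the given rate. -/
def LearnableRiskRate (ℓ : ℕ → ℕ → ℝ) (𝒟 : Set (Domain 𝒳 K)) (H : Set (𝒳 → ℕ))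
    (ε : ℕ → ℝ) : Prop :=
  ∃ A, ConsistentRisk ℓ 𝒟 H A ε

/-- learnability of OOD detection under risk -/
def LearnableRisk (ℓ : ℕ → ℕ → ℝ) (𝒟 : Set (Domain 𝒳 K)) (H : Set (𝒳 → ℕ)) : Prop :=
  ∃ ε : ℕ → ℝ, Antitone ε ∧ Tendsto ε atTop (nhds 0) ∧ LearnableRiskRate ℓ 𝒟 H ε

/-- `A` is strongly consistent: the expected excess `α`-risks are uniformly small over
all `α ∈ [0,1]`. -/
def StrongConsistentRisk (ℓ : ℕ → ℕ → ℝ) (𝒟 : Set (Domain 𝒳 K)) (H : Set (𝒳 → ℕ))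
    (A : Algorithm 𝒳 ℕ) (ε : ℕ → ℝ) : Prop :=
  (∀ n : ℕ, 1 ≤ n → ∀ S, A n S ∈ H) ∧
  (∀ D ∈ 𝒟, ∀ n : ℕ, 1 ≤ n → ∀ α : ℝ,
    Measurable fun S : Fin n → 𝒳 × ℕ => riskA ℓ D (A n S) α) ∧
  ∀ D ∈ 𝒟, ∀ n : ℕ, 1 ≤ n → ∀ α ∈ Set.Icc (0 : ℝ) 1,
    ∫ S, (riskA ℓ D (A n S) α - ⨅ h : H, riskA ℓ D h.1 α) ∂(sampleMeasure D n) ≤ ε n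

/-- strong learnability of OOD detection under risk -/
def StrongLearnableRisk (ℓ : ℕ → ℕ → ℝ) (𝒟 : Set (Domain 𝒳 K)) (H : Set (𝒳 → ℕ)) : Prop :=
  ∃ ε : ℕ → ℝ, Antitone ε ∧ Tendsto ε atTop (nhds 0) ∧
    ∃ A, StrongConsistentRisk ℓ 𝒟 H A ε

/-- the AUC of a ranking function `r` w.r.t. ID marginal `P` and OOD marginal `Q`:
`AUC(r) = E_{x ~ P} E_{x' ~ Q} [1_{r(x) > r(x')} + (1/2)·1_{r(x) = r(x')}]` -/
def AUC (r : 𝒳 → ℝ) (P Q : Measure 𝒳) : ℝ :=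
  ∫ x, (∫ x', ((if r x' < r x then (1 : ℝ) else 0) +
      (1 / 2) * (if r x = r x' then (1 : ℝ) else 0)) ∂Q) ∂P

/-- `A` is AUC-consistent w.r.t. `𝒟` with rate `ε`. -/
def ConsistentAUC (𝒟 : Set (Domain 𝒳 K)) (R : Set (𝒳 → ℝ))
    (A : Algorithm 𝒳 ℝ) (ε : ℕ → ℝ) : Prop :=
  (∀ n : ℕ, 1 ≤ n → ∀ S, A n S ∈ R) ∧
  (∀ D ∈ 𝒟, ∀ n : ℕ, 1 ≤ n →
    Measurable fun S : Fin n → 𝒳 × ℕ => AUC (A n S) D.margI D.margO) ∧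
  ∀ D ∈ 𝒟, ∀ n : ℕ, 1 ≤ n →
    ∫ S, ((⨆ r : R, AUC r.1 D.margI D.margO) - AUC (A n S) D.margI D.margO)
      ∂(sampleMeasure D n) ≤ ε n

/-- OOD detection is learnable under AUC in `𝒟` for `R` with the given rate. -/
def LearnableAUCRate (𝒟 : Set (Domain 𝒳 K)) (R : Set (𝒳 → ℝ)) (ε : ℕ → ℝ) : Prop :=
  ∃ A, ConsistentAUC 𝒟 R A ε

/-- learnability of OOD detection under AUC -/
def LearnableAUC (𝒟 : Set (Domain 𝒳 K)) (R : Set (𝒳 → ℝ)) : Prop :=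
  ∃ ε : ℕ → ℝ, Antitone ε ∧ Tendsto ε atTop (nhds 0) ∧ LearnableAUCRate 𝒟 R ε

/-- the (topological) support of a measure -/
def mSupport {α : Type*} [TopologicalSpace α] [MeasurableSpace α] (μ : Measure α) : Set α :=
  {x | ∀ U ∈ nhds x, 0 < μ U}

/-- the separate space `𝒟^s`: all domains whose ID and OOD marginals have disjoint supports -/
def separateSpace (𝒳 : Type*) [MeasurableSpace 𝒳] [TopologicalSpace 𝒳] (K : ℕ) :
    Set (Domain 𝒳 K) :=
  {D | mSupport D.margO ∩ mSupport D.margI = ∅}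

/-- a class `G` of binary functions (encoded as predicates) shatters the finite set `C` -/
def Shatters {α : Type*} (G : Set (α → Prop)) (C : Finset α) : Prop :=
  ∀ f : α → Prop, ∃ g ∈ G, ∀ x ∈ C, g x ↔ f x

/-- the VC dimension of a class of binary functions (encoded as predicates) -/
def VCdim {α : Type*} (G : Set (α → Prop)) : ℕ∞ :=
  sSup {n : ℕ∞ | ∃ C : Finset α, Shatters G C ∧ n = (C.card : ℕ∞)}

section Aux

variable {ℓ : ℕ → ℕ → ℝ} {B : ℝ}

lemma meas_loss {h : 𝒳 → ℕ} (hm : Measurable h) :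
    Measurable fun p : 𝒳 × ℕ => ℓ (h p.1) p.2 :=
  (measurable_of_countable fun q : ℕ × ℕ => ℓ q.1 q.2).comp
    ((hm.comp measurable_fst).prodMk measurable_snd)

lemma aeI (D : Domain 𝒳 K) : ∀ᵐ p ∂D.DI, p.2 ∈ Set.Icc 1 K := by
  rw [MeasureTheory.ae_iff]; exact D.suppI

lemma aeO (D : Domain 𝒳 K) : ∀ᵐ p ∂D.DO, p.2 = K + 1 := by
  rw [MeasureTheory.ae_iff]; exact D.suppO

lemma aebound_I (hnn : ∀ y₁ y₂, 0 ≤ ℓ y₁ y₂)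
    (hB : ∀ y₁ ∈ Set.Icc 1 (K + 1), ∀ y₂ ∈ Set.Icc 1 (K + 1), ℓ y₁ y₂ ≤ B)
    {h : 𝒳 → ℕ} (hr : ∀ x, h x ∈ Set.Icc 1 (K + 1)) (D : Domain 𝒳 K) :
    ∀ᵐ p ∂D.DI, ‖ℓ (h p.1) p.2‖ ≤ B := by
  filter_upwards [aeI D] with p hp
  rw [Real.norm_eq_abs, abs_of_nonneg (hnn _ _)]
  exact hB _ (hr _) _ ⟨hp.1, hp.2.trans (Nat.le_succ K)⟩

lemma aebound_O (hnn : ∀ y₁ y₂, 0 ≤ ℓ y₁ y₂)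
    (hB : ∀ y₁ ∈ Set.Icc 1 (K + 1), ∀ y₂ ∈ Set.Icc 1 (K + 1), ℓ y₁ y₂ ≤ B)
    {h : 𝒳 → ℕ} (hr : ∀ x, h x ∈ Set.Icc 1 (K + 1)) (D : Domain 𝒳 K) :
    ∀ᵐ p ∂D.DO, ‖ℓ (h p.1) p.2‖ ≤ B := by
  filter_upwards [aeO D] with p hp
  rw [Real.norm_eq_abs, abs_of_nonneg (hnn _ _), hp]
  exact hB _ (hr _) _ ⟨Nat.succ_le_succ (Nat.zero_le K), le_refl _⟩

lemma integrable_I (hnn : ∀ y₁ y₂, 0 ≤ ℓ y₁ y₂)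
    (hB : ∀ y₁ ∈ Set.Icc 1 (K + 1), ∀ y₂ ∈ Set.Icc 1 (K + 1), ℓ y₁ y₂ ≤ B)
    {h : 𝒳 → ℕ} (hm : Measurable h) (hr : ∀ x, h x ∈ Set.Icc 1 (K + 1)) (D : Domain 𝒳 K) :
    Integrable (fun p : 𝒳 × ℕ => ℓ (h p.1) p.2) D.DI := by
  haveI := D.probI
  exact (integrable_const B).mono' (meas_loss hm).aestronglyMeasurable (aebound_I hnn hB hr D)

lemma integrable_O (hnn : ∀ y₁ y₂, 0 ≤ ℓ y₁ y₂)
    (hB : ∀ y₁ ∈ Set.Icc 1 (K + 1), ∀ y₂ ∈ Set.Icc 1 (K + 1), ℓ y₁ y₂ ≤ B)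
    {h : 𝒳 → ℕ} (hm : Measurable h) (hr : ∀ x, h x ∈ Set.Icc 1 (K + 1)) (D : Domain 𝒳 K) :
    Integrable (fun p : 𝒳 × ℕ => ℓ (h p.1) p.2) D.DO := by
  haveI := D.probO
  exact (integrable_const B).mono' (meas_loss hm).aestronglyMeasurable (aebound_O hnn hB hr D)

lemma risk_eq (hnn : ∀ y₁ y₂, 0 ≤ ℓ y₁ y₂)
    (hB : ∀ y₁ ∈ Set.Icc 1 (K + 1), ∀ y₂ ∈ Set.Icc 1 (K + 1), ℓ y₁ y₂ ≤ B)
    {h : 𝒳 → ℕ} (hm : Measurable h) (hr : ∀ x, h x ∈ Set.Icc 1 (K + 1)) (D : Domain 𝒳 K) :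
    risk ℓ D h = riskA ℓ D h D.prior := by
  haveI := D.probI; haveI := D.probO
  have h1 : (0 : ℝ) ≤ 1 - D.prior := by linarith [D.prior_mem.2]
  have hout : ∫ p, ℓ (h p.1) p.2 ∂D.DO = riskOut ℓ D h := by
    refine integral_congr_ae ?_
    filter_upwards [aeO D] with p hp
    rw [hp]
  unfold risk Domain.joint
  rw [integral_add_measure ((integrable_I hnn hB hm hr D).smul_measure ENNReal.ofReal_ne_top)
      ((integrable_O hnn hB hm hr D).smul_measure ENNReal.ofReal_ne_top),
    integral_smul_measure, integral_smul_measure, ENNReal.toReal_ofReal h1,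
    ENNReal.toReal_ofReal D.prior_mem.1, hout]
  simp only [riskA, riskIn, smul_eq_mul]

lemma riskIn_nonneg (hnn : ∀ y₁ y₂, 0 ≤ ℓ y₁ y₂) (D : Domain 𝒳 K) (h : 𝒳 → ℕ) :
    0 ≤ riskIn ℓ D h := integral_nonneg fun p => hnn _ _

lemma riskOut_nonneg (hnn : ∀ y₁ y₂, 0 ≤ ℓ y₁ y₂) (D : Domain 𝒳 K) (h : 𝒳 → ℕ) :
    0 ≤ riskOut ℓ D h := integral_nonneg fun p => hnn _ _

lemma riskIn_le (hnn : ∀ y₁ y₂, 0 ≤ ℓ y₁ y₂)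
    (hB : ∀ y₁ ∈ Set.Icc 1 (K + 1), ∀ y₂ ∈ Set.Icc 1 (K + 1), ℓ y₁ y₂ ≤ B)
    {h : 𝒳 → ℕ} (hr : ∀ x, h x ∈ Set.Icc 1 (K + 1)) (D : Domain 𝒳 K) :
    riskIn ℓ D h ≤ B := by
  haveI := D.probI
  have hb : ‖∫ p, ℓ (h p.1) p.2 ∂D.DI‖ ≤ B * (D.DI Set.univ).toReal :=
    norm_integral_le_of_norm_le_const (aebound_I hnn hB hr D)
  rw [measure_univ, ENNReal.toReal_one, mul_one] at hb
  refine le_trans (le_abs_self _) ?_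
  rw [← Real.norm_eq_abs]
  exact hb

lemma riskOut_le (hnn : ∀ y₁ y₂, 0 ≤ ℓ y₁ y₂)
    (hB : ∀ y₁ ∈ Set.Icc 1 (K + 1), ∀ y₂ ∈ Set.Icc 1 (K + 1), ℓ y₁ y₂ ≤ B)
    {h : 𝒳 → ℕ} (hr : ∀ x, h x ∈ Set.Icc 1 (K + 1)) (D : Domain 𝒳 K) :
    riskOut ℓ D h ≤ B := by
  haveI := D.probO
  have hb : ‖∫ p : 𝒳 × ℕ, ℓ (h p.1) (K + 1) ∂D.DO‖ ≤ B * (D.DO Set.univ).toReal := by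
    refine norm_integral_le_of_norm_le_const (ae_of_all _ fun p => ?_)
    rw [Real.norm_eq_abs, abs_of_nonneg (hnn _ _)]
    exact hB _ (hr _) _ ⟨Nat.succ_le_succ (Nat.zero_le K), le_refl _⟩
  rw [measure_univ, ENNReal.toReal_one, mul_one] at hb
  refine le_trans (le_abs_self _) ?_
  rw [← Real.norm_eq_abs]
  exact hb

lemma riskA_nonneg (hnn : ∀ y₁ y₂, 0 ≤ ℓ y₁ y₂) (D : Domain 𝒳 K) (h : 𝒳 → ℕ)
    {α : ℝ} (hα : α ∈ Set.Icc (0 : ℝ) 1) : 0 ≤ riskA ℓ D h α :=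
  add_nonneg (mul_nonneg (by linarith [hα.2]) (riskIn_nonneg hnn D h))
    (mul_nonneg hα.1 (riskOut_nonneg hnn D h))

lemma riskA_le (hnn : ∀ y₁ y₂, 0 ≤ ℓ y₁ y₂)
    (hB : ∀ y₁ ∈ Set.Icc 1 (K + 1), ∀ y₂ ∈ Set.Icc 1 (K + 1), ℓ y₁ y₂ ≤ B)
    {h : 𝒳 → ℕ} (hr : ∀ x, h x ∈ Set.Icc 1 (K + 1)) (D : Domain 𝒳 K)
    {α : ℝ} (hα : α ∈ Set.Icc (0 : ℝ) 1) : riskA ℓ D h α ≤ B := by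
  have h1 := riskIn_le hnn hB hr D
  have h2 := riskOut_le hnn hB hr D
  have h3 := riskIn_nonneg hnn D h
  have h4 := riskOut_nonneg hnn D h
  have h5 := hα.1
  have h6 := hα.2
  simp only [riskA]
  nlinarith

lemma riskA_diff (hnn : ∀ y₁ y₂, 0 ≤ ℓ y₁ y₂)
    (hB : ∀ y₁ ∈ Set.Icc 1 (K + 1), ∀ y₂ ∈ Set.Icc 1 (K + 1), ℓ y₁ y₂ ≤ B)
    {h : 𝒳 → ℕ} (hr : ∀ x, h x ∈ Set.Icc 1 (K + 1)) (D : Domain 𝒳 K) (α β : ℝ) :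
    riskA ℓ D h α ≤ riskA ℓ D h β + |α - β| * B := by
  have h1 := riskIn_le hnn hB hr D
  have h2 := riskOut_le hnn hB hr D
  have h3 := riskIn_nonneg hnn D h
  have h4 := riskOut_nonneg hnn D h
  simp only [riskA]
  rcases abs_cases (α - β) with ⟨he, h5⟩ | ⟨he, h5⟩ <;> rw [he] <;> nlinarith

lemma infA_nonneg (hnn : ∀ y₁ y₂, 0 ≤ ℓ y₁ y₂) (D : Domain 𝒳 K) (H : Set (𝒳 → ℕ))
    {α : ℝ} (hα : α ∈ Set.Icc (0 : ℝ) 1) : 0 ≤ ⨅ h : H, riskA ℓ D h.1 α :=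
  Real.iInf_nonneg fun h => riskA_nonneg hnn D h.1 hα

lemma bddBelow_riskA (hnn : ∀ y₁ y₂, 0 ≤ ℓ y₁ y₂) (D : Domain 𝒳 K) (H : Set (𝒳 → ℕ))
    {α : ℝ} (hα : α ∈ Set.Icc (0 : ℝ) 1) :
    BddBelow (Set.range fun h : H => riskA ℓ D h.1 α) := by
  refine ⟨0, ?_⟩
  rintro x ⟨h, rfl⟩
  exact riskA_nonneg hnn D h.1 hα

lemma infA_le (hnn : ∀ y₁ y₂, 0 ≤ ℓ y₁ y₂)
    (hB : ∀ y₁ ∈ Set.Icc 1 (K + 1), ∀ y₂ ∈ Set.Icc 1 (K + 1), ℓ y₁ y₂ ≤ B) (hB0 : 0 ≤ B)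
    {H : Set (𝒳 → ℕ)} (hH : ∀ h ∈ H, Measurable h ∧ ∀ x, h x ∈ Set.Icc 1 (K + 1))
    (D : Domain 𝒳 K) {α : ℝ} (hα : α ∈ Set.Icc (0 : ℝ) 1) :
    (⨅ h : H, riskA ℓ D h.1 α) ≤ B := by
  cases isEmpty_or_nonempty (↥H) with
  | inl he => rw [Real.iInf_of_isEmpty]; exact hB0
  | inr hne =>
    obtain ⟨h₀⟩ := hne
    exact le_trans (ciInf_le (bddBelow_riskA hnn D H hα) h₀)
      (riskA_le hnn hB (hH h₀.1 h₀.2).2 D hα)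

lemma infA_shift (hnn : ∀ y₁ y₂, 0 ≤ ℓ y₁ y₂)
    (hB : ∀ y₁ ∈ Set.Icc 1 (K + 1), ∀ y₂ ∈ Set.Icc 1 (K + 1), ℓ y₁ y₂ ≤ B) (hB0 : 0 ≤ B)
    {H : Set (𝒳 → ℕ)} (hH : ∀ h ∈ H, Measurable h ∧ ∀ x, h x ∈ Set.Icc 1 (K + 1))
    (D : Domain 𝒳 K) {α β : ℝ} (hα : α ∈ Set.Icc (0 : ℝ) 1) :
    (⨅ h : H, riskA ℓ D h.1 α) ≤ (⨅ h : H, riskA ℓ D h.1 β) + |α - β| * B := by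
  have hc : 0 ≤ |α - β| * B := mul_nonneg (abs_nonneg _) hB0
  cases isEmpty_or_nonempty (↥H) with
  | inl he => rw [Real.iInf_of_isEmpty, Real.iInf_of_isEmpty]; linarith
  | inr hne =>
    have key : ∀ h : H, (⨅ h' : H, riskA ℓ D h'.1 α) - |α - β| * B ≤ riskA ℓ D h.1 β := by
      intro h
      have l1 := ciInf_le (bddBelow_riskA hnn D H hα) h
      have l2 := riskA_diff hnn hB (hH h.1 h.2).2 D α β
      linarith
    have := le_ciInf key
    linarith

lemma excess_bound (hnn : ∀ y₁ y₂, 0 ≤ ℓ y₁ y₂)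
    (hB : ∀ y₁ ∈ Set.Icc 1 (K + 1), ∀ y₂ ∈ Set.Icc 1 (K + 1), ℓ y₁ y₂ ≤ B) (hB0 : 0 ≤ B)
    {H : Set (𝒳 → ℕ)} (hH : ∀ h ∈ H, Measurable h ∧ ∀ x, h x ∈ Set.Icc 1 (K + 1))
    (D : Domain 𝒳 K) {h : 𝒳 → ℕ} (hhH : h ∈ H) {α : ℝ} (hα : α ∈ Set.Icc (0 : ℝ) 1) :
    ‖riskA ℓ D h α - ⨅ h' : H, riskA ℓ D h'.1 α‖ ≤ 2 * B := by
  have h1 := riskA_nonneg hnn D h hα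
  have h2 := riskA_le hnn hB (hH h hhH).2 D hα
  have h3 := infA_nonneg hnn D H hα
  have h4 := infA_le hnn hB hB0 hH D hα
  rw [Real.norm_eq_abs, abs_le]
  constructor <;> linarith

lemma withPrior_self (D : Domain 𝒳 K) : D.withPrior ⟨D.prior, D.prior_mem⟩ = D := rfl

lemma sampleMeasure_prob (D : Domain 𝒳 K) (n : ℕ) :
    IsProbabilityMeasure (sampleMeasure D n) := by
  haveI := D.probI
  unfold sampleMeasure
  infer_instance

lemma strong_of_consistent (hnn : ∀ y₁ y₂, 0 ≤ ℓ y₁ y₂)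
    (hB : ∀ y₁ ∈ Set.Icc 1 (K + 1), ∀ y₂ ∈ Set.Icc 1 (K + 1), ℓ y₁ y₂ ≤ B) (hB0 : 0 ≤ B)
    {H : Set (𝒳 → ℕ)} (hH : ∀ h ∈ H, Measurable h ∧ ∀ x, h x ∈ Set.Icc 1 (K + 1))
    {𝒟 𝒟₂ : Set (Domain 𝒳 K)}
    (hmem : ∀ D ∈ 𝒟, ∀ β : Set.Ico (0 : ℝ) 1, D.withPrior β ∈ 𝒟₂)
    {A : Algorithm 𝒳 ℕ} {ε : ℕ → ℝ}
    (hc : ConsistentRisk ℓ 𝒟₂ H A ε) :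
    StrongConsistentRisk ℓ 𝒟 H A ε := by
  obtain ⟨hA, hmeas, hexc⟩ := hc
  have keyfun : ∀ D ∈ 𝒟, ∀ n : ℕ, 1 ≤ n → ∀ (β : ℝ) (hβ : β ∈ Set.Ico (0 : ℝ) 1),
      (fun S : Fin n → 𝒳 × ℕ => risk ℓ (D.withPrior ⟨β, hβ⟩) (A n S)) =
        fun S => riskA ℓ D (A n S) β := by
    intro D hD n hn β hβ
    funext S
    rw [risk_eq hnn hB (hH _ (hA n hn S)).1 (hH _ (hA n hn S)).2 (D.withPrior ⟨β, hβ⟩)]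
    rfl
  have mA : ∀ D ∈ 𝒟, ∀ n : ℕ, 1 ≤ n → ∀ γ : ℝ,
      Measurable fun S : Fin n → 𝒳 × ℕ => riskA ℓ D (A n S) γ := by
    intro D hD n hn γ
    have p0 : (0 : ℝ) ∈ Set.Ico (0 : ℝ) 1 := ⟨le_refl 0, zero_lt_one⟩
    have ph : (1 / 2 : ℝ) ∈ Set.Ico (0 : ℝ) 1 := by norm_num
    have mI : Measurable fun S : Fin n → 𝒳 × ℕ => riskIn ℓ D (A n S) := by
      have m0 := hmeas _ (hmem D hD ⟨0, p0⟩) n hn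
      rw [keyfun D hD n hn 0 p0] at m0
      have e0 : (fun S : Fin n → 𝒳 × ℕ => riskA ℓ D (A n S) (0 : ℝ)) =
          fun S => riskIn ℓ D (A n S) := by
        funext S; simp only [riskA]; ring
      rwa [e0] at m0
    have mO : Measurable fun S : Fin n → 𝒳 × ℕ => riskOut ℓ D (A n S) := by
      have m0 := hmeas _ (hmem D hD ⟨1 / 2, ph⟩) n hn
      rw [keyfun D hD n hn (1 / 2) ph] at m0
      have e0 : (fun S : Fin n → 𝒳 × ℕ => riskOut ℓ D (A n S)) =
          fun S => 2 * riskA ℓ D (A n S) (1 / 2 : ℝ) - riskIn ℓ D (A n S) := by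
        funext S; simp only [riskA]; ring
      rw [e0]
      exact (m0.const_mul 2).sub mI
    have e : (fun S : Fin n → 𝒳 × ℕ => riskA ℓ D (A n S) γ) =
        fun S => (1 - γ) * riskIn ℓ D (A n S) + γ * riskOut ℓ D (A n S) := rfl
    rw [e]
    exact (mI.const_mul _).add (mO.const_mul _)
  have hIco : ∀ D ∈ 𝒟, ∀ n : ℕ, 1 ≤ n → ∀ (β : ℝ) (hβ : β ∈ Set.Ico (0 : ℝ) 1),
      ∫ S, (riskA ℓ D (A n S) β - ⨅ h : H, riskA ℓ D h.1 β) ∂(sampleMeasure D n) ≤ ε n := by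
    intro D hD n hn β hβ
    have he := hexc _ (hmem D hD ⟨β, hβ⟩) n hn
    have eqf : (fun S : Fin n → 𝒳 × ℕ =>
          risk ℓ (D.withPrior ⟨β, hβ⟩) (A n S) -
            ⨅ h : H, risk ℓ (D.withPrior ⟨β, hβ⟩) h.1) =
        fun S => riskA ℓ D (A n S) β - ⨅ h : H, riskA ℓ D h.1 β := by
      funext S
      rw [risk_eq hnn hB (hH _ (hA n hn S)).1 (hH _ (hA n hn S)).2 (D.withPrior ⟨β, hβ⟩),
        iInf_congr fun h : H =>
          risk_eq hnn hB (hH h.1 h.2).1 (hH h.1 h.2).2 (D.withPrior ⟨β, hβ⟩)]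
      rfl
    rw [eqf] at he
    exact he
  refine ⟨hA, fun D hD n hn α => mA D hD n hn α, ?_⟩
  intro D hD n hn α hα
  rcases lt_or_eq_of_le hα.2 with hlt | heq
  · exact hIco D hD n hn α ⟨hα.1, hlt⟩
  · subst heq
    haveI := sampleMeasure_prob D n
    apply le_of_forall_pos_le_add
    intro δ hδ
    have hBpos : (0 : ℝ) < 2 * B + 1 := by linarith
    set m : ℝ := min (δ / (2 * B + 1)) 1 with hmdef
    have hm0 : 0 < m := lt_min (div_pos hδ hBpos) one_pos
    have hm1 : m ≤ 1 := min_le_right _ _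
    have hmB : m * (2 * B + 1) ≤ δ := by
      have h := min_le_left (δ / (2 * B + 1)) 1
      calc m * (2 * B + 1) ≤ δ / (2 * B + 1) * (2 * B + 1) :=
            mul_le_mul_of_nonneg_right h hBpos.le
        _ = δ := div_mul_cancel₀ δ hBpos.ne'
    have hcB : 2 * m * B ≤ δ := by nlinarith
    have hβm : (1 - m) ∈ Set.Ico (0 : ℝ) 1 := ⟨by linarith, by linarith⟩
    have hβI : (1 - m) ∈ Set.Icc (0 : ℝ) 1 := ⟨hβm.1, hβm.2.le⟩
    have h1I : (1 : ℝ) ∈ Set.Icc (0 : ℝ) 1 := ⟨zero_le_one, le_refl 1⟩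
    have habs1 : |(1 : ℝ) - (1 - m)| = m := by
      rw [show (1 : ℝ) - (1 - m) = m from by ring]
      exact abs_of_nonneg hm0.le
    have habs2 : |(1 - m) - (1 : ℝ)| = m := by
      rw [show (1 - m) - (1 : ℝ) = -m from by ring, abs_neg]
      exact abs_of_nonneg hm0.le
    have hpt : ∀ S : Fin n → 𝒳 × ℕ,
        riskA ℓ D (A n S) 1 - (⨅ h : H, riskA ℓ D h.1 1) ≤
          (riskA ℓ D (A n S) (1 - m) - ⨅ h : H, riskA ℓ D h.1 (1 - m)) + 2 * m * B := by
      intro S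
      have l1 := riskA_diff hnn hB (hH _ (hA n hn S)).2 D 1 (1 - m)
      have l2 := infA_shift hnn hB hB0 hH D (α := 1 - m) (β := 1) hβI
      rw [habs1] at l1
      rw [habs2] at l2
      linarith
    have int1 : Integrable
        (fun S : Fin n → 𝒳 × ℕ => riskA ℓ D (A n S) 1 - ⨅ h : H, riskA ℓ D h.1 1)
        (sampleMeasure D n) := by
      refine (integrable_const (2 * B)).mono'
        ((mA D hD n hn 1).sub measurable_const).aestronglyMeasurable
        (ae_of_all _ fun S => ?_)
      exact excess_bound hnn hB hB0 hH D (hA n hn S) h1I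
    have intβ : Integrable
        (fun S : Fin n → 𝒳 × ℕ =>
          riskA ℓ D (A n S) (1 - m) - ⨅ h : H, riskA ℓ D h.1 (1 - m))
        (sampleMeasure D n) := by
      refine (integrable_const (2 * B)).mono'
        ((mA D hD n hn (1 - m)).sub measurable_const).aestronglyMeasurable
        (ae_of_all _ fun S => ?_)
      exact excess_bound hnn hB hB0 hH D (hA n hn S) hβI
    have hIβ := hIco D hD n hn (1 - m) hβm
    calc ∫ S, (riskA ℓ D (A n S) 1 - ⨅ h : H, riskA ℓ D h.1 1) ∂(sampleMeasure D n)
        ≤ ∫ S, ((riskA ℓ D (A n S) (1 - m) - ⨅ h : H, riskA ℓ D h.1 (1 - m)) + 2 * m * B)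
            ∂(sampleMeasure D n) :=
          integral_mono int1 (intβ.add (integrable_const _)) hpt
      _ = (∫ S, (riskA ℓ D (A n S) (1 - m) - ⨅ h : H, riskA ℓ D h.1 (1 - m))
            ∂(sampleMeasure D n)) + 2 * m * B := by
          rw [integral_add intβ (integrable_const _), integral_const, probReal_univ,
            one_smul]
      _ ≤ ε n + δ := by linarith

lemma consistent_of_strong (hnn : ∀ y₁ y₂, 0 ≤ ℓ y₁ y₂)
    (hB : ∀ y₁ ∈ Set.Icc 1 (K + 1), ∀ y₂ ∈ Set.Icc 1 (K + 1), ℓ y₁ y₂ ≤ B)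
    {H : Set (𝒳 → ℕ)} (hH : ∀ h ∈ H, Measurable h ∧ ∀ x, h x ∈ Set.Icc 1 (K + 1))
    {𝒟 𝒟₂ : Set (Domain 𝒳 K)}
    (hmem : ∀ D' ∈ 𝒟₂, ∃ D ∈ 𝒟, ∃ β : Set.Ico (0 : ℝ) 1, D' = D.withPrior β)
    {A : Algorithm 𝒳 ℕ} {ε : ℕ → ℝ}
    (hs : StrongConsistentRisk ℓ 𝒟 H A ε) :
    ConsistentRisk ℓ 𝒟₂ H A ε := by
  obtain ⟨hA, hmeas, hexc⟩ := hs
  refine ⟨hA, ?_, ?_⟩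
  · intro D' hD' n hn
    obtain ⟨D, hD, β, rfl⟩ := hmem D' hD'
    have e : (fun S : Fin n → 𝒳 × ℕ => risk ℓ (D.withPrior β) (A n S)) =
        fun S => riskA ℓ D (A n S) β.1 := by
      funext S
      rw [risk_eq hnn hB (hH _ (hA n hn S)).1 (hH _ (hA n hn S)).2 (D.withPrior β)]
      rfl
    rw [e]
    exact hmeas D hD n hn β.1
  · intro D' hD' n hn
    obtain ⟨D, hD, β, rfl⟩ := hmem D' hD'
    have eqf : (fun S : Fin n → 𝒳 × ℕ =>
          risk ℓ (D.withPrior β) (A n S) - ⨅ h : H, risk ℓ (D.withPrior β) h.1) =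
        fun S => riskA ℓ D (A n S) β.1 - ⨅ h : H, riskA ℓ D h.1 β.1 := by
      funext S
      rw [risk_eq hnn hB (hH _ (hA n hn S)).1 (hH _ (hA n hn S)).2 (D.withPrior β),
        iInf_congr fun h : H =>
          risk_eq hnn hB (hH h.1 h.2).1 (hH h.1 h.2).2 (D.withPrior β)]
      rfl
    rw [eqf]
    exact hexc D hD n hn β.1 ⟨β.2.1, β.2.2.le⟩

end Aux

/-- Theorem 1 of the paper.  Given any domain space `𝒟`, a hypothesis
space `H`, a ranking function space `R`, and `𝒟' = {D^α : D ∈ 𝒟, α ∈ [0,1)}`: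
(1) `𝒟'` is prior-unknown and contains `𝒟`; (2) if `𝒟` is prior-unknown then
learnability and strong learnability under risk coincide on `𝒟`; (3) strong learnability
under risk on `𝒟` is equivalent to learnability under risk on `𝒟'`; (4) learnability
under AUC on `𝒟` is equivalent to learnability under AUC on `𝒟'`. -/
theorem stmt0 {d K : ℕ} (X : Set (EuclideanSpace ℝ (Fin d)))
    (ℓ : ℕ → ℕ → ℝ)
    (hl_nonneg : ∀ y₁ y₂, 0 ≤ ℓ y₁ y₂)
    (hl_zero : ∀ y₁ ∈ Set.Icc 1 (K + 1), ∀ y₂ ∈ Set.Icc 1 (K + 1), (ℓ y₁ y₂ = 0 ↔ y₁ = y₂))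
    (hl_bdd : ∃ B, ∀ y₁ ∈ Set.Icc 1 (K + 1), ∀ y₂ ∈ Set.Icc 1 (K + 1), ℓ y₁ y₂ ≤ B)
    (H : Set (↥X → ℕ)) (hH : ∀ h ∈ H, Measurable h ∧ ∀ x, h x ∈ Set.Icc 1 (K + 1))
    (R : Set (↥X → ℝ)) (hR : ∀ r ∈ R, Measurable r)
    (𝒟 𝒟' : Set (Domain ↥X K))
    (h𝒟' : 𝒟' = {D' | ∃ D ∈ 𝒟, ∃ α : Set.Ico (0 : ℝ) 1, D' = D.withPrior α}) :
    (PriorUnknown 𝒟' ∧ 𝒟 ⊆ 𝒟') ∧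
    (PriorUnknown 𝒟 → (LearnableRisk ℓ 𝒟 H ↔ StrongLearnableRisk ℓ 𝒟 H)) ∧
    (StrongLearnableRisk ℓ 𝒟 H ↔ LearnableRisk ℓ 𝒟' H) ∧
    (LearnableAUC 𝒟 R ↔ LearnableAUC 𝒟' R) := by
  obtain ⟨B₀, hB₀⟩ := hl_bdd
  have hB : ∀ y₁ ∈ Set.Icc 1 (K + 1), ∀ y₂ ∈ Set.Icc 1 (K + 1), ℓ y₁ y₂ ≤ max B₀ 0 :=
    fun y₁ h₁ y₂ h₂ => (hB₀ y₁ h₁ y₂ h₂).trans (le_max_left _ _)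
  have hB0 : (0 : ℝ) ≤ max B₀ 0 := le_max_right _ _
  subst h𝒟'
  refine ⟨⟨?_, ?_⟩, ?_, ?_, ?_⟩
  · -- 𝒟' is prior-unknown
    rintro D' ⟨D, hD, β, rfl⟩ α
    exact ⟨D, hD, α, rfl⟩
  · -- 𝒟 ⊆ 𝒟'
    intro D hD
    exact ⟨D, hD, ⟨D.prior, D.prior_mem⟩, (withPrior_self D).symm⟩
  · -- (2)
    intro hPU
    constructor
    · rintro ⟨ε, he1, he2, A, hA⟩
      exact ⟨ε, he1, he2, A, strong_of_consistent hl_nonneg hB hB0 hH hPU hA⟩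
    · rintro ⟨ε, he1, he2, A, hA⟩
      exact ⟨ε, he1, he2, A, consistent_of_strong hl_nonneg hB hH
        (fun D' hD' => ⟨D', hD', ⟨D'.prior, D'.prior_mem⟩, (withPrior_self D').symm⟩) hA⟩
  · -- (3)
    constructor
    · rintro ⟨ε, he1, he2, A, hA⟩
      exact ⟨ε, he1, he2, A, consistent_of_strong hl_nonneg hB hH (fun D' hD' => hD') hA⟩
    · rintro ⟨ε, he1, he2, A, hA⟩
      exact ⟨ε, he1, he2, A, strong_of_consistent
        (𝒟₂ := {D' | ∃ D ∈ 𝒟, ∃ α : Set.Ico (0 : ℝ) 1, D' = D.withPrior α})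
        hl_nonneg hB hB0 hH (fun D hD β => ⟨D, hD, β, rfl⟩) hA⟩
  · -- (4)
    have hAUCc : ∀ (A : Algorithm ↥X ℝ) (ε : ℕ → ℝ), ConsistentAUC 𝒟 R A ε ↔
        ConsistentAUC {D' | ∃ D ∈ 𝒟, ∃ α : Set.Ico (0 : ℝ) 1, D' = D.withPrior α} R A ε := by
      intro A ε
      constructor
      · rintro ⟨h1, h2, h3⟩
        refine ⟨h1, ?_, ?_⟩
        · rintro D' ⟨D, hD, α, rfl⟩ n hn
          exact h2 D hD n hn
        · rintro D' ⟨D, hD, α, rfl⟩ n hn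
          exact h3 D hD n hn
      · rintro ⟨h1, h2, h3⟩
        refine ⟨h1, ?_, ?_⟩
        · intro D hD n hn
          exact h2 D ⟨D, hD, ⟨D.prior, D.prior_mem⟩, (withPrior_self D).symm⟩ n hn
        · intro D hD n hn
          exact h3 D ⟨D, hD, ⟨D.prior, D.prior_mem⟩, (withPrior_self D).symm⟩ n hn
    constructor
    · rintro ⟨ε, he1, he2, A, hA⟩
      exact ⟨ε, he1, he2, A, (hAUCc A ε).mp hA⟩
    · rintro ⟨ε, he1, he2, A, hA⟩
      exact ⟨ε, he1, he2, A, (hAUCc A ε).mpr hA⟩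

end OODF

end
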